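/- Let A be a symmetric positive definite d×d matrix with μI ⪯ A ⪯ LI where 0 < μ ≤ L, and let D = diag(A, μI) and A_sym = [[0, A],[A, 0]] be 2d×2d matrices. Then every eigenvalue λ of D^{-1} A_sym satisfies |λ| ≤ √(L/μ). Consequently, for 0 ≤ α ≤ √(μ/L), (1 − α√(L/μ)) D ⪯ D + α A_sym ⪯ (1 + α√(L/μ)) D. -/

import Mathlib

open Matrix

private lemma psd_smul_aux {n : Type*} [Fintype n] {M : Matrix n n ℝ} (h : M.PosSemidef)
    {a : ℝ} (ha : 0 ≤ a) : (a • M).PosSemidef := by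
  refine PosSemidef.of_dotProduct_mulVec_nonneg ?_ (fun x => ?_)
  · show (a • M)ᴴ = a • M
    rw [conjTranspose_smul, h.1.eq, star_trivial]
  · rw [smul_mulVec, dotProduct_smul, smul_eq_mul]
    exact mul_nonneg ha (h.dotProduct_mulVec_nonneg x)

private lemma symm_dot {d : ℕ} {A : Matrix (Fin d) (Fin d) ℝ} (hAsymm : A.IsSymm)
    (x y : Fin d → ℝ) : y ⬝ᵥ A *ᵥ x = x ⬝ᵥ A *ᵥ y := by
  rw [dotProduct_mulVec, ← mulVec_transpose, hAsymm.eq, dotProduct_comm]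

/-- Eigenvalue bound for `D⁻¹ A_sym` and the resulting Loewner-order sandwich
`(1 − α√(L/μ)) D ⪯ D + α A_sym ⪯ (1 + α√(L/μ)) D` for `0 ≤ α ≤ √(μ/L)`. -/
theorem block_matrix_eigenvalue_and_loewner_bounds {d : ℕ}
    (A : Matrix (Fin d) (Fin d) ℝ) (μ L : ℝ) (hμ : 0 < μ) (hμL : μ ≤ L)
    (hAsymm : A.IsSymm) (hApos : A.PosDef)
    (hlow : (A - μ • (1 : Matrix (Fin d) (Fin d) ℝ)).PosSemidef)
    (hupp : (L • (1 : Matrix (Fin d) (Fin d) ℝ) - A).PosSemidef)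
    (D Asym : Matrix (Fin d ⊕ Fin d) (Fin d ⊕ Fin d) ℝ)
    (hD : D = Matrix.fromBlocks A 0 0 (μ • 1))
    (hAsym : Asym = Matrix.fromBlocks 0 A A 0) :
    (∀ (lam : ℝ) (v : Fin d ⊕ Fin d → ℝ), v ≠ 0 →
        (D⁻¹ * Asym) *ᵥ v = lam • v → |lam| ≤ Real.sqrt (L / μ)) ∧
    (∀ α : ℝ, 0 ≤ α → α ≤ Real.sqrt (μ / L) →
        ((D + α • Asym) - (1 - α * Real.sqrt (L / μ)) • D).PosSemidef ∧
        ((1 + α * Real.sqrt (L / μ)) • D - (D + α • Asym)).PosSemidef) := by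
  have hL : 0 < L := lt_of_lt_of_le hμ hμL
  set c : ℝ := Real.sqrt (L / μ) with hc_def
  have hLμ : 0 < L / μ := div_pos hL hμ
  have hc : 0 < c := Real.sqrt_pos.mpr hLμ
  have hc2 : c ^ 2 = L / μ := Real.sq_sqrt hLμ.le
  have hmul : c * c = L / μ := by rw [← hc2]; ring
  have hcs : c * c * μ = L := by rw [hmul]; field_simp
  -- upper bound on the quadratic form of A
  have hAupp : ∀ y : Fin d → ℝ, y ⬝ᵥ A *ᵥ y ≤ L * (y ⬝ᵥ y) := by
    intro y
    have := hupp.dotProduct_mulVec_nonneg y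
    simp only [star_trivial, sub_mulVec, smul_mulVec, one_mulVec, dotProduct_sub,
      dotProduct_smul, smul_eq_mul] at this
    linarith
  -- key scalar inequality
  have key : ∀ (x y : Fin d → ℝ) (s : ℝ), s = 1 ∨ s = -1 →
      0 ≤ c * (x ⬝ᵥ A *ᵥ x) + c * μ * (y ⬝ᵥ y) + s * (2 * (x ⬝ᵥ A *ᵥ y)) := by
    intro x y s hs
    have hs2 : s * s = 1 := by rcases hs with h | h <;> simp [h]
    have h0 : 0 ≤ (c • x + s • y) ⬝ᵥ A *ᵥ (c • x + s • y) := by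
      simpa using hApos.posSemidef.dotProduct_mulVec_nonneg (c • x + s • y)
    have hexp : (c • x + s • y) ⬝ᵥ A *ᵥ (c • x + s • y)
        = (L / μ) * (x ⬝ᵥ A *ᵥ x) + 2 * (c * s) * (x ⬝ᵥ A *ᵥ y) + (y ⬝ᵥ A *ᵥ y) := by
      simp only [mulVec_add, mulVec_smul, dotProduct_add, add_dotProduct, dotProduct_smul,
        smul_dotProduct, smul_eq_mul]
      linear_combination (x ⬝ᵥ A *ᵥ x) * hmul + (y ⬝ᵥ A *ᵥ y) * hs2
        + (c * s) * (symm_dot hAsymm x y)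
    rw [hexp] at h0
    have hyA := hAupp y
    have hkey : 0 ≤ c * (c * (x ⬝ᵥ A *ᵥ x) + c * μ * (y ⬝ᵥ y) + s * (2 * (x ⬝ᵥ A *ᵥ y))) := by
      have hid : c * (c * (x ⬝ᵥ A *ᵥ x) + c * μ * (y ⬝ᵥ y) + s * (2 * (x ⬝ᵥ A *ᵥ y)))
          = ((L / μ) * (x ⬝ᵥ A *ᵥ x) + 2 * (c * s) * (x ⬝ᵥ A *ᵥ y) + (y ⬝ᵥ A *ᵥ y))
            + (L * (y ⬝ᵥ y) - (y ⬝ᵥ A *ᵥ y)) := by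
        linear_combination (x ⬝ᵥ A *ᵥ x) * hmul + (y ⬝ᵥ y) * hcs
      rw [hid]; linarith
    have h1 := div_nonneg hkey hc.le
    rwa [mul_div_cancel_left₀ _ hc.ne'] at h1
  -- symmetry of D and Asym
  have hDsymm : D.IsHermitian := by
    show Dᴴ = D
    rw [hD]
    simp [fromBlocks_transpose, transpose_smul, hAsymm.eq]
  have hAsymSymm : Asym.IsHermitian := by
    show Asymᴴ = Asym
    rw [hAsym]
    simp [fromBlocks_transpose, hAsymm.eq]
  -- the two central PSD matrices
  have hPSD : ∀ s : ℝ, s = 1 ∨ s = -1 → (c • D + s • Asym).PosSemidef := by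
    intro s hs
    refine PosSemidef.of_dotProduct_mulVec_nonneg ?_ (fun z => ?_)
    · show (c • D + s • Asym)ᴴ = c • D + s • Asym
      rw [conjTranspose_add, conjTranspose_smul, conjTranspose_smul, hDsymm.eq, hAsymSymm.eq,
        star_trivial, star_trivial]
    · set x : Fin d → ℝ := z ∘ Sum.inl with hx
      set y : Fin d → ℝ := z ∘ Sum.inr with hy
      have hDz : D *ᵥ z = Sum.elim (A *ᵥ x) (μ • y) := by
        rw [hD, fromBlocks_mulVec]
        simp only [zero_mulVec, add_zero, zero_add, smul_mulVec, one_mulVec, ← hx, ← hy]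
      have hAz : Asym *ᵥ z = Sum.elim (A *ᵥ y) (A *ᵥ x) := by
        rw [hAsym, fromBlocks_mulVec]
        simp only [zero_mulVec, add_zero, zero_add, ← hx, ← hy]
      have hq : z ⬝ᵥ (c • D + s • Asym) *ᵥ z
          = c * (x ⬝ᵥ A *ᵥ x) + c * μ * (y ⬝ᵥ y) + s * ((x ⬝ᵥ A *ᵥ y) + (y ⬝ᵥ A *ᵥ x)) := by
        rw [add_mulVec, smul_mulVec, smul_mulVec, hDz, hAz, dotProduct_add,
          dotProduct_smul, dotProduct_smul, dotProduct_block, dotProduct_block]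
        simp only [Sum.elim_comp_inl, Sum.elim_comp_inr, smul_eq_mul, dotProduct_smul, ← hx, ← hy]
        ring
      rw [star_trivial, hq, symm_dot hAsymm x y]
      have := key x y s hs
      linarith
  constructor
  · -- eigenvalue bound
    intro lam v hv hEig
    have hDdet : IsUnit D.det := by
      rw [hD, det_fromBlocks_zero₂₁, det_smul, det_one]
      exact (mul_ne_zero hApos.det_pos.ne' (by positivity)).isUnit
    have hEq : Asym *ᵥ v = lam • (D *ᵥ v) := by
      have h1 : D *ᵥ ((D⁻¹ * Asym) *ᵥ v) = Asym *ᵥ v := by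
        rw [mulVec_mulVec, ← mul_assoc, mul_nonsing_inv _ hDdet, one_mul]
      rw [← h1, hEig, mulVec_smul]
    set x : Fin d → ℝ := v ∘ Sum.inl with hx
    set y : Fin d → ℝ := v ∘ Sum.inr with hy
    have hDv : D *ᵥ v = Sum.elim (A *ᵥ x) (μ • y) := by
      rw [hD, fromBlocks_mulVec]
      simp only [zero_mulVec, add_zero, zero_add, smul_mulVec, one_mulVec, ← hx, ← hy]
    have hAv : Asym *ᵥ v = Sum.elim (A *ᵥ y) (A *ᵥ x) := by
      rw [hAsym, fromBlocks_mulVec]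
      simp only [zero_mulVec, add_zero, zero_add, ← hx, ← hy]
    rw [hDv, hAv] at hEq
    have h1 : A *ᵥ y = lam • (A *ᵥ x) := by
      funext i
      have := congrFun hEq (Sum.inl i)
      simpa using this
    have h2 : A *ᵥ x = lam • (μ • y) := by
      funext i
      have := congrFun hEq (Sum.inr i)
      simpa using this
    have hAinj : Function.Injective A.mulVec := mulVec_injective_iff_isUnit.mpr hApos.isUnit
    have hyx : y = lam • x := hAinj (by rw [h1, mulVec_smul])
    have hx0 : x ≠ 0 := by
      intro h
      apply hv
      funext i
      cases i with
      | inl i => exact congrFun h i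
      | inr i =>
        show v (Sum.inr i) = 0
        have : y i = 0 := by rw [hyx, h]; simp
        exact this
    have hAx : A *ᵥ x = (lam ^ 2 * μ) • x := by
      rw [h2, hyx, smul_smul, smul_smul]
      congr 1
      ring
    have hxx : 0 < x ⬝ᵥ x := by
      have h0 : 0 ≤ x ⬝ᵥ x := Finset.sum_nonneg fun i _ => mul_self_nonneg _
      exact lt_of_le_of_ne h0 (Ne.symm (mt dotProduct_self_eq_zero.mp hx0))
    have hquad : x ⬝ᵥ A *ᵥ x = (lam ^ 2 * μ) * (x ⬝ᵥ x) := by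
      rw [hAx, dotProduct_smul, smul_eq_mul]
    have hup := hAupp x
    have hlam2 : lam ^ 2 ≤ L / μ := by
      rw [le_div_iff₀ hμ]
      have : (lam ^ 2 * μ) * (x ⬝ᵥ x) ≤ L * (x ⬝ᵥ x) := by rw [← hquad]; exact hup
      exact le_of_mul_le_mul_right this hxx
    calc |lam| = Real.sqrt (lam ^ 2) := (Real.sqrt_sq_eq_abs lam).symm
      _ ≤ Real.sqrt (L / μ) := Real.sqrt_le_sqrt hlam2
  · intro α hα hαL
    have h1 : (D + α • Asym) - (1 - α * c) • D = α • (c • D + (1:ℝ) • Asym) := by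
      module
    have h2 : (1 + α * c) • D - (D + α • Asym) = α • (c • D + (-1:ℝ) • Asym) := by
      module
    exact ⟨h1 ▸ psd_smul_aux (hPSD 1 (Or.inl rfl)) hα,
      h2 ▸ psd_smul_aux (hPSD (-1) (Or.inr rfl)) hα⟩
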